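/- arXiv:1403.6974 — 2 statements merged into one kernel-verified Lean document; each statement's English description precedes it below -/
import Mathlib

section
/- For a matrix A with restricted isometry constant δ_T and any index set 𝒯 with |𝒯| ≤ T such that A_𝒯 has full column rank, for all vectors y one has ‖A_𝒯† y‖ ≤ (1/√(1−δ_T)) ‖y‖, where A_𝒯† = (A_𝒯* A_𝒯)^{-1} A_𝒯*. -/
open Matrix Finset

/-- Euclidean (ℓ2) norm of a finitely-indexed real vector. -/
noncomputable def enorm2 {ι : Type*} [Fintype ι] (x : ι → ℝ) : ℝ :=
  Real.sqrt (∑ i, x i ^ 2)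

/-- `x` is `T`-sparse: it has at most `T` nonzero entries. -/
def sparse {N : ℕ} (T : ℕ) (x : Fin N → ℝ) : Prop :=
  (Finset.univ.filter (fun i => x i ≠ 0)).card ≤ T

/-- Support of a vector as a finset. -/
noncomputable def fsupp {N : ℕ} (x : Fin N → ℝ) : Finset (Fin N) :=
  Finset.univ.filter (fun i => x i ≠ 0)

/-- Restricted isometry property with constant `δ` at sparsity level `T`. -/
def RIP {M N : ℕ} (A : Matrix (Fin M) (Fin N) ℝ) (T : ℕ) (δ : ℝ) : Prop :=
  ∀ x : Fin N → ℝ, sparse T x →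
    (1 - δ) * enorm2 x ^ 2 ≤ enorm2 (A.mulVec x) ^ 2 ∧
    enorm2 (A.mulVec x) ^ 2 ≤ (1 + δ) * enorm2 x ^ 2

/-- Column submatrix of `A` indexed by the finset `𝒯`. -/
def cols {M N : ℕ} (A : Matrix (Fin M) (Fin N) ℝ) (𝒯 : Finset (Fin N)) :
    Matrix (Fin M) 𝒯 ℝ := A.submatrix id (fun i => (i : Fin N))

/-- Pseudo-inverse `(Bᵀ B)⁻¹ Bᵀ` (full column rank assumed where used). -/
noncomputable def pinv {M : ℕ} {ι : Type*} [Fintype ι] [DecidableEq ι]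
    (B : Matrix (Fin M) ι ℝ) : Matrix ι (Fin M) ℝ := (Bᵀ * B)⁻¹ * Bᵀ

/-- `x` restricted to the index set `S` (zero off `S`). -/
def restr {N : ℕ} (x : Fin N → ℝ) (S : Finset (Fin N)) : Fin N → ℝ :=
  fun i => if i ∈ S then x i else 0

/-- Zero-pad a vector indexed by `S` to a full-length vector. -/
noncomputable def scatter {N : ℕ} (S : Finset (Fin N)) (v : S → ℝ) : Fin N → ℝ :=
  fun i => if h : i ∈ S then v ⟨i, h⟩ else 0

theorem stmt0 {M N T : ℕ} (A : Matrix (Fin M) (Fin N) ℝ) (δ : ℝ)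
    (hδ0 : 0 ≤ δ) (hδ1 : δ < 1) (hRIP : RIP A T δ)
    (𝒯 : Finset (Fin N)) (hcard : 𝒯.card ≤ T)
    (hrank : IsUnit ((cols A 𝒯)ᵀ * cols A 𝒯).det) :
    ∀ y : Fin M → ℝ,
      enorm2 ((pinv (cols A 𝒯)).mulVec y) ≤ (1 / Real.sqrt (1 - δ)) * enorm2 y := by
  intro y
  set B := cols A 𝒯 with hB
  set z : 𝒯 → ℝ := (pinv B).mulVec y with hz
  set u : Fin M → ℝ := B.mulVec z with hu
  -- key: Bᵀ u = Bᵀ y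
  have hGz : Bᵀ.mulVec u = Bᵀ.mulVec y := by
    rw [hu, hz, pinv, Matrix.mulVec_mulVec, Matrix.mulVec_mulVec,
      ← Matrix.mul_assoc, Matrix.mul_nonsing_inv _ hrank, Matrix.one_mul]
  set x : Fin N → ℝ := scatter 𝒯 z with hx
  have hxmem : ∀ (j : Fin N) (h : j ∈ 𝒯), x j = z ⟨j, h⟩ := fun j h => dif_pos h
  have hxnot : ∀ (j : Fin N), j ∉ 𝒯 → x j = 0 := fun j h => dif_neg h
  have hsp : sparse T x := by
    refine le_trans (le_trans (Finset.card_le_card ?_) le_rfl) hcard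
    intro j hj
    simp only [Finset.mem_filter, Finset.mem_univ, true_and] at hj
    by_contra h
    exact hj (hxnot j h)
  have hAx : A.mulVec x = u := by
    funext i
    show ∑ j, A i j * x j = ∑ s : 𝒯, B i s * z s
    calc ∑ j, A i j * x j
        = ∑ j ∈ 𝒯, A i j * x j := by
          refine (Finset.sum_subset (Finset.subset_univ 𝒯) ?_).symm
          intro j _ hj; rw [hxnot j hj, mul_zero]
      _ = ∑ s ∈ 𝒯.attach, A i (s : Fin N) * x (s : Fin N) :=
          (Finset.sum_attach 𝒯 (fun j => A i j * x j)).symm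
      _ = ∑ s : 𝒯, B i s * z s := by
          rw [Finset.univ_eq_attach]
          refine Finset.sum_congr rfl fun s _ => ?_
          rw [hxmem (s : Fin N) s.2]
          rfl
  have hnormx : ∑ j, x j ^ 2 = ∑ s : 𝒯, z s ^ 2 := by
    calc ∑ j, x j ^ 2
        = ∑ j ∈ 𝒯, x j ^ 2 := by
          refine (Finset.sum_subset (Finset.subset_univ 𝒯) ?_).symm
          intro j _ hj; rw [hxnot j hj]; ring
      _ = ∑ s ∈ 𝒯.attach, x (s : Fin N) ^ 2 :=
          (Finset.sum_attach 𝒯 (fun j => x j ^ 2)).symm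
      _ = ∑ s : 𝒯, z s ^ 2 := by
          rw [Finset.univ_eq_attach]
          refine Finset.sum_congr rfl fun s _ => ?_
          rw [hxmem (s : Fin N) s.2]
  -- S = ∑ u², Y = ∑ y², Z = ∑ z²
  set S := ∑ i, u i ^ 2 with hS
  set Y := ∑ i, y i ^ 2 with hY
  set Z := ∑ s : 𝒯, z s ^ 2 with hZ
  have hS0 : 0 ≤ S := Finset.sum_nonneg fun i _ => sq_nonneg _
  have hY0 : 0 ≤ Y := Finset.sum_nonneg fun i _ => sq_nonneg _
  have hZ0 : 0 ≤ Z := Finset.sum_nonneg fun i _ => sq_nonneg _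
  -- RIP lower bound: (1-δ) Z ≤ S
  have hRIPlow : (1 - δ) * Z ≤ S := by
    have := (hRIP x hsp).1
    rw [hAx] at this
    have e1 : enorm2 x ^ 2 = Z := by
      rw [enorm2, Real.sq_sqrt (Finset.sum_nonneg fun i _ => sq_nonneg _), hnormx]
    have e2 : enorm2 u ^ 2 = S := by
      rw [enorm2, Real.sq_sqrt (Finset.sum_nonneg fun i _ => sq_nonneg _)]
    rwa [e1, e2] at this
  -- S = u ⬝ y
  have hSuy : S = ∑ i, u i * y i := by
    have h1 : S = u ⬝ᵥ u := by
      simp [hS, dotProduct, sq]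
    have h2 : u ⬝ᵥ u = u ⬝ᵥ y := by
      have := congrArg (fun w => w ⬝ᵥ z) hGz
      simp only [Matrix.mulVec_transpose] at this
      calc u ⬝ᵥ u = u ⬝ᵥ B.mulVec z := by rw [← hu]
        _ = (u ᵥ* B) ⬝ᵥ z := Matrix.dotProduct_mulVec u B z
        _ = (y ᵥ* B) ⬝ᵥ z := this
        _ = y ⬝ᵥ B.mulVec z := (Matrix.dotProduct_mulVec y B z).symm
        _ = y ⬝ᵥ u := by rw [← hu]
        _ = u ⬝ᵥ y := dotProduct_comm y u
    rw [h1, h2]; rfl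
  -- Cauchy–Schwarz: S² ≤ S Y
  have hCS : S ^ 2 ≤ S * Y := by
    calc S ^ 2 = (∑ i, u i * y i) ^ 2 := by rw [hSuy]
      _ ≤ (∑ i, u i ^ 2) * ∑ i, y i ^ 2 := Finset.sum_mul_sq_le_sq_mul_sq _ _ _
      _ = S * Y := rfl
  have hSY : S ≤ Y := by
    rcases eq_or_lt_of_le hS0 with h | h
    · rw [← h]; exact hY0
    · nlinarith
  have hZY : (1 - δ) * Z ≤ Y := le_trans hRIPlow hSY
  have h1δ : (0:ℝ) < 1 - δ := by linarith
  have hZle : Z ≤ Y / (1 - δ) := (le_div_iff₀' h1δ).mpr hZY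
  show Real.sqrt Z ≤ 1 / Real.sqrt (1 - δ) * Real.sqrt Y
  calc Real.sqrt Z ≤ Real.sqrt (Y / (1 - δ)) := Real.sqrt_le_sqrt hZle
    _ = Real.sqrt Y / Real.sqrt (1 - δ) := Real.sqrt_div' Y h1δ.le
    _ = 1 / Real.sqrt (1 - δ) * Real.sqrt Y := by ring
end

section
/- For a matrix A with restricted isometry constant δ_T and any index set 𝒯 with |𝒯| ≤ T, for all vectors x of dimension |𝒯| one has (1−δ_T)‖x‖ ≤ ‖A_𝒯* A_𝒯 x‖ ≤ (1+δ_T)‖x‖, and consequently (1/(1+δ_T))‖x‖ ≤ ‖(A_𝒯* A_𝒯)^{-1} x‖ ≤ (1/(1−δ_T))‖x‖. -/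
open Matrix Finset

lemma enorm_nonneg' {ι : Type*} [Fintype ι] (x : ι → ℝ) : 0 ≤ enorm2 x :=
  Real.sqrt_nonneg _

lemma enorm_sq {ι : Type*} [Fintype ι] (x : ι → ℝ) : enorm2 x ^ 2 = x ⬝ᵥ x := by
  unfold enorm2
  rw [Real.sq_sqrt (by positivity)]
  simp [dotProduct, sq]

lemma dot_G {M : ℕ} {ι : Type*} [Fintype ι] (B : Matrix (Fin M) ι ℝ) (x y : ι → ℝ) :
    x ⬝ᵥ (Bᵀ * B) *ᵥ y = (B *ᵥ x) ⬝ᵥ (B *ᵥ y) := by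
  rw [← Matrix.mulVec_mulVec, Matrix.dotProduct_mulVec, Matrix.vecMul_transpose]

lemma cs_psd {ι : Type*} [Fintype ι] (G : Matrix ι ι ℝ)
    (hsym : ∀ x y : ι → ℝ, x ⬝ᵥ G *ᵥ y = y ⬝ᵥ G *ᵥ x)
    (hpsd : ∀ v : ι → ℝ, 0 ≤ v ⬝ᵥ G *ᵥ v)
    (x y : ι → ℝ) : (x ⬝ᵥ G *ᵥ y) ^ 2 ≤ (x ⬝ᵥ G *ᵥ x) * (y ⬝ᵥ G *ᵥ y) := by
  have key : ∀ t : ℝ,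
      0 ≤ (y ⬝ᵥ G *ᵥ y) * (t * t) + (2 * (x ⬝ᵥ G *ᵥ y)) * t + (x ⬝ᵥ G *ᵥ x) := by
    intro t
    have h := hpsd (x + t • y)
    have e : (x + t • y) ⬝ᵥ G *ᵥ (x + t • y)
        = (y ⬝ᵥ G *ᵥ y) * (t * t) + (2 * (x ⬝ᵥ G *ᵥ y)) * t + (x ⬝ᵥ G *ᵥ x) := by
      rw [Matrix.mulVec_add, Matrix.mulVec_smul]
      simp only [add_dotProduct, dotProduct_add, smul_dotProduct,
        dotProduct_smul, smul_eq_mul]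
      rw [hsym y x]
      ring
    linarith [e ▸ h]
  have hd := discrim_le_zero key
  rw [discrim] at hd
  nlinarith [hd]

lemma cs_dot {ι : Type*} [Fintype ι] [DecidableEq ι] (x y : ι → ℝ) :
    (x ⬝ᵥ y) ^ 2 ≤ (x ⬝ᵥ x) * (y ⬝ᵥ y) := by
  have := cs_psd (1 : Matrix ι ι ℝ)
    (fun a b => by rw [Matrix.one_mulVec, Matrix.one_mulVec, dotProduct_comm])
    (fun v => by rw [Matrix.one_mulVec]; exact Finset.sum_nonneg fun i _ => mul_self_nonneg _)
    x y
  simpa [Matrix.one_mulVec] using this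

lemma mulVec_scatter {M N : ℕ} (A : Matrix (Fin M) (Fin N) ℝ) (S : Finset (Fin N))
    (v : S → ℝ) : A *ᵥ (scatter S v) = (cols A S) *ᵥ v := by
  funext m
  show (∑ j, A m j * scatter S v j) = ∑ i : S, A m (i : Fin N) * v i
  rw [← Finset.sum_subset S.subset_univ
    (fun j _ hj => by simp [scatter, hj])]
  rw [← Finset.sum_coe_sort S (fun j => A m j * scatter S v j)]
  exact Finset.sum_congr rfl fun i _ => by simp [scatter, i.2]

lemma enorm_scatter {N : ℕ} (S : Finset (Fin N)) (v : S → ℝ) :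
    enorm2 (scatter S v) = enorm2 v := by
  unfold enorm2
  congr 1
  rw [← Finset.sum_subset S.subset_univ (fun j _ hj => by simp [scatter, hj])]
  rw [← Finset.sum_coe_sort S (fun j => scatter S v j ^ 2)]
  exact Finset.sum_congr rfl fun i _ => by simp [scatter, i.2]

lemma sparse_scatter {N T : ℕ} (S : Finset (Fin N)) (hS : S.card ≤ T) (v : S → ℝ) :
    sparse T (scatter S v) := by
  refine le_trans (Finset.card_le_card ?_) hS
  intro i hi
  simp only [Finset.mem_filter, Finset.mem_univ, true_and] at hi
  by_contra h
  exact hi (by simp [scatter, h])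
theorem stmt2 {M N T : ℕ} (A : Matrix (Fin M) (Fin N) ℝ) (δ : ℝ)
    (hδ0 : 0 ≤ δ) (hδ1 : δ < 1) (hRIP : RIP A T δ)
    (𝒯 : Finset (Fin N)) (hcard : 𝒯.card ≤ T) :
    ∀ x : 𝒯 → ℝ,
      ((1 - δ) * enorm2 x ≤ enorm2 (((cols A 𝒯)ᵀ * cols A 𝒯).mulVec x) ∧
        enorm2 (((cols A 𝒯)ᵀ * cols A 𝒯).mulVec x) ≤ (1 + δ) * enorm2 x) ∧
      ((1 / (1 + δ)) * enorm2 x ≤ enorm2 ((((cols A 𝒯)ᵀ * cols A 𝒯)⁻¹).mulVec x) ∧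
        enorm2 ((((cols A 𝒯)ᵀ * cols A 𝒯)⁻¹).mulVec x) ≤ (1 / (1 - δ)) * enorm2 x) := by
  intro x
  have hδm : (0:ℝ) < 1 - δ := by linarith
  have hδp : (0:ℝ) < 1 + δ := by linarith
  set B := cols A 𝒯 with hB
  set G := Bᵀ * B with hG
  have quad : ∀ v : 𝒯 → ℝ,
      (1 - δ) * (v ⬝ᵥ v) ≤ v ⬝ᵥ G *ᵥ v ∧ v ⬝ᵥ G *ᵥ v ≤ (1 + δ) * (v ⬝ᵥ v) := by
    intro v
    have h := hRIP (scatter 𝒯 v) (sparse_scatter 𝒯 hcard v)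
    rw [enorm_scatter, mulVec_scatter] at h
    simp only [enorm_sq] at h
    rw [hG, dot_G]
    exact h
  have hsym : ∀ a b : 𝒯 → ℝ, a ⬝ᵥ G *ᵥ b = b ⬝ᵥ G *ᵥ a := fun a b => by
    rw [hG, dot_G, dot_G, dotProduct_comm]
  have hdotnn : ∀ v : 𝒯 → ℝ, 0 ≤ v ⬝ᵥ v := fun v => by
    rw [← enorm_sq]; positivity
  have hpsd : ∀ v : 𝒯 → ℝ, 0 ≤ v ⬝ᵥ G *ᵥ v := fun v => by
    have h1 := (quad v).1
    have h2 := hdotnn v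
    nlinarith
  have main : ∀ v : 𝒯 → ℝ,
      (1 - δ) * enorm2 v ≤ enorm2 (G *ᵥ v) ∧ enorm2 (G *ᵥ v) ≤ (1 + δ) * enorm2 v := by
    intro v
    have ha0 : 0 ≤ enorm2 (G *ᵥ v) := enorm_nonneg' _
    have hb0 : 0 ≤ enorm2 v := enorm_nonneg' _
    have haa : enorm2 (G *ᵥ v) ^ 2 = (G *ᵥ v) ⬝ᵥ (G *ᵥ v) := enorm_sq _
    have hbb : enorm2 v ^ 2 = v ⬝ᵥ v := enorm_sq _
    constructor
    · have hcs := cs_dot v (G *ᵥ v)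
      have h1 := (quad v).1
      rcases eq_or_lt_of_le hb0 with hbz | hbp
      · nlinarith
      · have hub : v ⬝ᵥ G *ᵥ v ≤ enorm2 v * enorm2 (G *ᵥ v) := by
          nlinarith [hpsd v, mul_nonneg hb0 ha0]
        nlinarith
    · have hcs := cs_psd G hsym hpsd (G *ᵥ v) v
      have h2v := (quad v).2
      have h2w := (quad (G *ᵥ v)).2
      rcases eq_or_lt_of_le ha0 with haz | hap
      · nlinarith
      · have hw := hdotnn (G *ᵥ v)
        have t1 : (G *ᵥ v ⬝ᵥ G *ᵥ (G *ᵥ v)) * (v ⬝ᵥ G *ᵥ v)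
            ≤ ((1 + δ) * (G *ᵥ v ⬝ᵥ G *ᵥ v)) * ((1 + δ) * (v ⬝ᵥ v)) :=
          mul_le_mul h2w h2v (hpsd v) (mul_nonneg hδp.le hw)
        have hs2 : enorm2 (G *ᵥ v) ^ 2 ≤ ((1 + δ) * enorm2 v) ^ 2 := by
          have hs : 0 < G *ᵥ v ⬝ᵥ G *ᵥ v := by rw [← haa]; exact pow_pos hap 2
          have key : (G *ᵥ v ⬝ᵥ G *ᵥ v) * (G *ᵥ v ⬝ᵥ G *ᵥ v)
              ≤ ((1 + δ) ^ 2 * (v ⬝ᵥ v)) * (G *ᵥ v ⬝ᵥ G *ᵥ v) := by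
            nlinarith [le_trans hcs t1]
          have hdiv := le_of_mul_le_mul_right key hs
          nlinarith [hdiv]
        have hsq := Real.sqrt_le_sqrt hs2
        rwa [Real.sqrt_sq hap.le, Real.sqrt_sq (mul_nonneg hδp.le hb0)] at hsq
  have hGT : Gᵀ = G := by rw [hG, Matrix.transpose_mul, Matrix.transpose_transpose]
  have hposdef : G.PosDef := by
    rw [Matrix.posDef_iff_dotProduct_mulVec]
    constructor
    · rw [Matrix.IsHermitian]; simpa using hGT
    · intro v hv
      have h1 := (quad v).1
      have hvv : 0 < v ⬝ᵥ v :=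
        lt_of_le_of_ne (hdotnn v) (fun h => hv (dotProduct_self_eq_zero.mp h.symm))
      simpa using (by nlinarith : (0:ℝ) < v ⬝ᵥ G *ᵥ v)
  have hdet : IsUnit G.det := isUnit_iff_ne_zero.mpr (ne_of_gt hposdef.det_pos)
  have hinv : G *ᵥ (G⁻¹ *ᵥ x) = x := by
    rw [Matrix.mulVec_mulVec, Matrix.mul_nonsing_inv G hdet, Matrix.one_mulVec]
  refine ⟨main x, ?_⟩
  have hm := main (G⁻¹ *ᵥ x)
  rw [hinv] at hm
  constructor
  · rw [div_mul_eq_mul_div, div_le_iff₀ hδp]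
    have := hm.2
    nlinarith
  · rw [div_mul_eq_mul_div, le_div_iff₀ hδm]
    have := hm.1
    nlinarith
end
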